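/- Let A be an abelian category and let (A ← R_A) be an object of the Freyd category A(A), with structure morphism ρ_A : R_A → A. Let F : A^op → Ab be the corresponding finitely presented functor, namely the cokernel of the natural transformation Hom_A(−, R_A) → Hom_A(−, A) induced by ρ_A. Then F is left exact (preserves finite limits) if and only if the morphism of A(A) from (A ← R_A) to (coker(ρ_A) ← 0), represented by the cokernel projection ε : A → coker(ρ_A), is an isomorphism in A(A). -/

import Mathlib

open CategoryTheory Limits Opposite

set_option linter.unusedSectionVars false

universe v u

/-- An object of the Freyd category of `P`: a morphism `ρ : R ⟶ A` of `P`,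
thought of as "the object `A` with relations `R`". -/
structure FreydObj (P : Type u) [CategoryTheory.Category.{v} P] : Type max u v where
  R : P
  A : P
  ρ : R ⟶ A

namespace FreydObj

variable {P : Type u} [Category.{v} P] [Preadditive P]

/-- The "pre-Freyd" category: morphisms are morphism data admitting a witness;
the Freyd category is its quotient by the relation of having a homotopy `λ`. -/
instance : Category.{v} (FreydObj P) where
  Hom X Y := {α : X.A ⟶ Y.A // ∃ w : X.R ⟶ Y.R, X.ρ ≫ α = w ≫ Y.ρ}
  id X := ⟨𝟙 X.A, ⟨𝟙 X.R, by simp⟩⟩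
  comp {X Y Z} f g := ⟨f.1 ≫ g.1, by
    obtain ⟨w, hw⟩ := f.2
    obtain ⟨v, hv⟩ := g.2
    refine ⟨w ≫ v, ?_⟩
    rw [← Category.assoc, hw, Category.assoc, hv, Category.assoc]⟩
  id_comp f := Subtype.ext (Category.id_comp _)
  comp_id f := Subtype.ext (Category.comp_id _)
  assoc f g h := Subtype.ext (Category.assoc _ _ _)

@[simp] lemma comp_val {X Y Z : FreydObj P} (f : X ⟶ Y) (g : Y ⟶ Z) :
    (f ≫ g).1 = f.1 ≫ g.1 := rfl

@[simp] lemma id_val (X : FreydObj P) : (𝟙 X : X ⟶ X).1 = 𝟙 X.A := rfl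

instance homAdd (X Y : FreydObj P) : Add (X ⟶ Y) :=
  ⟨fun f g => ⟨f.1 + g.1, by
    obtain ⟨w, hw⟩ := f.2
    obtain ⟨v, hv⟩ := g.2
    exact ⟨w + v, by rw [Preadditive.comp_add, Preadditive.add_comp, hw, hv]⟩⟩⟩

instance homZero (X Y : FreydObj P) : Zero (X ⟶ Y) := ⟨⟨0, ⟨0, by simp⟩⟩⟩

instance homNeg (X Y : FreydObj P) : Neg (X ⟶ Y) :=
  ⟨fun f => ⟨-f.1, by
    obtain ⟨w, hw⟩ := f.2
    exact ⟨-w, by rw [Preadditive.comp_neg, Preadditive.neg_comp, hw]⟩⟩⟩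

@[simp] lemma add_val {X Y : FreydObj P} (f g : X ⟶ Y) : (f + g).1 = f.1 + g.1 := rfl
@[simp] lemma zero_val (X Y : FreydObj P) : (0 : X ⟶ Y).1 = 0 := rfl
@[simp] lemma neg_val {X Y : FreydObj P} (f : X ⟶ Y) : (-f).1 = -f.1 := rfl

instance homAddCommGroup (X Y : FreydObj P) : AddCommGroup (X ⟶ Y) where
  add_assoc f g h := Subtype.ext (add_assoc f.1 g.1 h.1)
  zero_add f := Subtype.ext (zero_add f.1)
  add_zero f := Subtype.ext (add_zero f.1)
  add_comm f g := Subtype.ext (add_comm f.1 g.1)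
  neg_add_cancel f := Subtype.ext (neg_add_cancel f.1)
  nsmul := nsmulRec
  zsmul := zsmulRec

instance : Preadditive (FreydObj P) where
  add_comp _ _ _ f f' g := Subtype.ext (by simp [Preadditive.add_comp])
  comp_add _ _ _ f g g' := Subtype.ext (by simp [Preadditive.comp_add])

end FreydObj

/-- Two morphism data are identified in the Freyd category iff their difference
factors through the relations of the target. -/
def freydRel (P : Type u) [Category.{v} P] [Preadditive P] : HomRel (FreydObj P) :=
  fun {X Y} f g => ∃ l : X.A ⟶ Y.R, l ≫ Y.ρ = f.1 - g.1

instance freydRel_congruence (P : Type u) [Category.{v} P] [Preadditive P] :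
    Congruence (freydRel P) where
  equivalence :=
    { refl := fun f => ⟨0, by simp⟩
      symm := fun {f g} h => by
        obtain ⟨l, hl⟩ := h
        exact ⟨-l, by rw [Preadditive.neg_comp, hl]; abel⟩
      trans := fun {f g h} h₁ h₂ => by
        obtain ⟨l₁, hl₁⟩ := h₁
        obtain ⟨l₂, hl₂⟩ := h₂
        exact ⟨l₁ + l₂, by rw [Preadditive.add_comp, hl₁, hl₂]; abel⟩ }
  comp_left := fun {_ _ _} f {g g'} h => by
    obtain ⟨l, hl⟩ := h
    exact ⟨f.1 ≫ l, by rw [Category.assoc, hl, Preadditive.comp_sub]; rfl⟩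
  comp_right := fun {_ _ _} {f f'} g h => by
    obtain ⟨l, hl⟩ := h
    obtain ⟨w, hw⟩ := g.2
    exact ⟨l ≫ w, by
      rw [Category.assoc, ← hw, ← Category.assoc, hl, Preadditive.sub_comp]; rfl⟩

/-- The Freyd category of an additive category `P`. -/
abbrev Freyd (P : Type u) [Category.{v} P] [Preadditive P] :=
  CategoryTheory.Quotient (freydRel P)

noncomputable instance (P : Type u) [Category.{v} P] [Preadditive P] :
    Preadditive (Freyd P) :=
  CategoryTheory.Quotient.preadditive (freydRel P) (by
    rintro X Y f₁ f₂ g₁ g₂ ⟨l₁, hl₁⟩ ⟨l₂, hl₂⟩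
    exact ⟨l₁ + l₂, by
      rw [Preadditive.add_comp, hl₁, hl₂]
      show _ = (f₁ + g₁).1 - (f₂ + g₂).1
      simp only [FreydObj.add_val]
      abel⟩)

/-- The projection functor from the pre-Freyd category to the Freyd category. -/
abbrev Freyd.Q (P : Type u) [Category.{v} P] [Preadditive P] :
    FreydObj P ⥤ Freyd P :=
  CategoryTheory.Quotient.functor (freydRel P)

/-- `P` has weak kernels. -/
def HasWeakKernels (P : Type u) [Category.{v} P] [Preadditive P] : Prop :=
  ∀ ⦃A B : P⦄ (f : A ⟶ B), ∃ (K : P) (κ : K ⟶ A), κ ≫ f = 0 ∧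
    ∀ ⦃T : P⦄ (τ : T ⟶ A), τ ≫ f = 0 → ∃ u : T ⟶ K, u ≫ κ = τ

open ZeroObject


section AuxProofs

open CategoryTheory Limits Opposite

variable {A : Type u} [Category.{v} A] [Abelian A]

lemma freyd_pi_app_comp_zero (X : FreydObj A) {T : Aᵒᵖ} (h : (unop T) ⟶ X.R) :
    (cokernel.π (preadditiveYoneda.map X.ρ)).app T (h ≫ X.ρ) = 0 := by
  have h0 : ((preadditiveYoneda.map X.ρ).app T ≫
      (cokernel.π (preadditiveYoneda.map X.ρ)).app T) h = 0 := by
    rw [← NatTrans.comp_app, cokernel.condition]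
    rfl
  exact h0

theorem freyd_aux_forward (X : FreydObj A)
    (hF : PreservesFiniteLimits (cokernel (preadditiveYoneda.map X.ρ))) :
    ∃ (σ : cokernel X.ρ ⟶ X.A) (l : X.A ⟶ X.R),
      l ≫ X.ρ = cokernel.π X.ρ ≫ σ - 𝟙 X.A ∧ σ ≫ cokernel.π X.ρ = 𝟙 _ := by
  set F := cokernel (preadditiveYoneda.map X.ρ) with hFdef
  set p := cokernel.π (preadditiveYoneda.map X.ρ) with hpdef
  haveI := hF
  haveI hz : F.PreservesZeroMorphisms := inferInstance
  have hw : (cokernel.π X.ρ).op ≫ X.ρ.op = 0 := by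
    rw [← op_comp, cokernel.condition, op_zero]
  have hker : IsLimit (KernelFork.ofι (cokernel.π X.ρ).op hw) :=
    CokernelCofork.IsColimit.ofπOp (cokernel.π X.ρ) (cokernel.condition X.ρ)
      (cokernelIsCokernel X.ρ)
  have hkerF := KernelFork.mapIsLimit _ hker F
  set T : ShortComplex AddCommGrpCat :=
    ShortComplex.mk (F.map (cokernel.π X.ρ).op) (F.map X.ρ.op)
      (by rw [← F.map_comp, hw, F.map_zero]) with hTdef
  have hTex : T.Exact := T.exact_of_f_is_kernel hkerF
  rw [ShortComplex.ab_exact_iff] at hTex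
  have h2 : p.app (op X.R) X.ρ = 0 := by
    have h := freyd_pi_app_comp_zero X (T := op X.R) (𝟙 X.R)
    rwa [Category.id_comp] at h
  have hx : F.map X.ρ.op (p.app (op X.A) (𝟙 X.A)) = 0 := by
    rw [← NatTrans.naturality_apply p X.ρ.op (𝟙 X.A)]
    have e : (preadditiveYoneda.obj X.A).map X.ρ.op (𝟙 X.A) = X.ρ := Category.comp_id X.ρ
    rw [e, h2]
  obtain ⟨y, hy⟩ := hTex (p.app (op X.A) (𝟙 X.A)) hx
  have hsurj : Function.Surjective (p.app (op (cokernel X.ρ))) := by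
    rw [← AddCommGrpCat.epi_iff_surjective]
    infer_instance
  obtain ⟨σ, hσ⟩ := hsurj y
  have hnat : F.map (cokernel.π X.ρ).op (p.app (op (cokernel X.ρ)) σ)
      = p.app (op X.A) ((cokernel.π X.ρ ≫ σ : X.A ⟶ X.A)) := by
    rw [← NatTrans.naturality_apply p (cokernel.π X.ρ).op σ]
    rfl
  set S : ShortComplex (Aᵒᵖ ⥤ AddCommGrpCat.{v}) :=
    ShortComplex.mk (preadditiveYoneda.map X.ρ) p (cokernel.condition _) with hSdef
  have hSex : S.Exact := S.exact_of_g_is_cokernel (cokernelIsCokernel _)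
  have hSev : (S.map ((evaluation Aᵒᵖ AddCommGrpCat.{v}).obj (op X.A))).Exact :=
    hSex.map_of_epi_of_preservesCokernel _
      (inferInstance : Epi (cokernel.π (preadditiveYoneda.map X.ρ)))
      inferInstance
  rw [ShortComplex.ab_exact_iff] at hSev
  have hzel : p.app (op X.A) ((cokernel.π X.ρ ≫ σ - 𝟙 X.A : X.A ⟶ X.A)) = 0 := by
    refine (map_sub _ _ _).trans ?_
    rw [← hnat, hσ, hy, sub_self]
  obtain ⟨l, hl⟩ := hSev ((cokernel.π X.ρ ≫ σ - 𝟙 X.A : X.A ⟶ X.A)) hzel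
  have hl2 : (l : X.A ⟶ X.R) ≫ X.ρ = cokernel.π X.ρ ≫ σ - 𝟙 X.A := hl
  refine ⟨σ, l, hl2, ?_⟩
  rw [← cancel_epi (cokernel.π X.ρ), Category.comp_id]
  have h0 : (cokernel.π X.ρ ≫ σ - 𝟙 X.A) ≫ cokernel.π X.ρ = 0 := by
    rw [← hl2]
    exact (Category.assoc _ _ _).trans (by rw [cokernel.condition]; exact comp_zero)
  rw [Preadditive.sub_comp, sub_eq_zero, Category.id_comp] at h0
  exact (Category.assoc _ _ _).symm.trans h0

theorem freyd_aux_backward (X : FreydObj A)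
    (σ : cokernel X.ρ ⟶ X.A) (l : X.A ⟶ X.R)
    (hl : l ≫ X.ρ = cokernel.π X.ρ ≫ σ - 𝟙 X.A)
    (hσ : σ ≫ cokernel.π X.ρ = 𝟙 _) :
    PreservesFiniteLimits (cokernel (preadditiveYoneda.map X.ρ)) := by
  have hcond : preadditiveYoneda.map X.ρ ≫ preadditiveYoneda.map (cokernel.π X.ρ) = 0 := by
    rw [← Functor.map_comp, cokernel.condition]
    ext T g
    simp
  let φ : cokernel (preadditiveYoneda.map X.ρ) ⟶ preadditiveYoneda.obj (cokernel X.ρ) :=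
    cokernel.desc _ (preadditiveYoneda.map (cokernel.π X.ρ)) hcond
  have key : preadditiveYoneda.map (cokernel.π X.ρ ≫ σ) ≫
      cokernel.π (preadditiveYoneda.map X.ρ) = cokernel.π (preadditiveYoneda.map X.ρ) := by
    ext T g
    obtain ⟨g', rfl⟩ : ∃ g' : (unop T) ⟶ X.A, g' = g := ⟨g, rfl⟩
    have e1 : g' ≫ (cokernel.π X.ρ ≫ σ) = g' + (g' ≫ l) ≫ X.ρ := by
      rw [Category.assoc, hl, Preadditive.comp_sub, Category.comp_id]
      abel
    have e2 := freyd_pi_app_comp_zero X (g' ≫ l)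
    have lhs : ((preadditiveYoneda.map (cokernel.π X.ρ ≫ σ)).app T ≫
        (cokernel.π (preadditiveYoneda.map X.ρ)).app T) g' =
        (cokernel.π (preadditiveYoneda.map X.ρ)).app T
          (g' ≫ (cokernel.π X.ρ ≫ σ)) := rfl
    rw [NatTrans.comp_app]
    rw [lhs, e1]
    refine (map_add _ _ _).trans ?_
    exact (congrArg (_ + ·) e2).trans (add_zero _)
  have hpφ : cokernel.π (preadditiveYoneda.map X.ρ) ≫ φ =
      preadditiveYoneda.map (cokernel.π X.ρ) := cokernel.π_desc _ _ _
  have hom_inv : φ ≫ (preadditiveYoneda.map σ ≫ cokernel.π (preadditiveYoneda.map X.ρ)) =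
      𝟙 _ := by
    rw [← cancel_epi (cokernel.π (preadditiveYoneda.map X.ρ)), Category.comp_id,
      ← Category.assoc, hpφ, ← Category.assoc, ← Functor.map_comp]
    exact key
  have inv_hom : (preadditiveYoneda.map σ ≫ cokernel.π (preadditiveYoneda.map X.ρ)) ≫ φ =
      𝟙 _ := by
    rw [Category.assoc, hpφ, ← Functor.map_comp, hσ, CategoryTheory.Functor.map_id]
  let e : cokernel (preadditiveYoneda.map X.ρ) ≅ preadditiveYoneda.obj (cokernel X.ρ) :=
    ⟨φ, preadditiveYoneda.map σ ≫ cokernel.π (preadditiveYoneda.map X.ρ), hom_inv, inv_hom⟩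
  exact preservesFiniteLimits_of_natIso e.symm

end AuxProofs

/-- let `A` be abelian and `(A ← R_A)` an object of `A(A)`, with
corresponding finitely presented functor `F = coker(Hom(−,R_A) → Hom(−,A))`.  Then `F`
is left exact if and only if the morphism `(A ← R_A) ⟶ (coker ρ_A ← 0)` of the Freyd
category represented by the cokernel projection is an isomorphism. -/
theorem fp_functor_leftExact_iff (A : Type u) [Category.{v} A] [Abelian A]
    (X : FreydObj A) :
    Nonempty (PreservesFiniteLimits (cokernel (preadditiveYoneda.map X.ρ))) ↔
      IsIso ((Freyd.Q A).map (X := X) (Y := ⟨0, cokernel X.ρ, 0⟩)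
        ⟨cokernel.π X.ρ, ⟨0, by simp⟩⟩) := by
  constructor
  · rintro ⟨hF⟩
    obtain ⟨σ, l, hl, hσ⟩ := freyd_aux_forward X hF
    refine ⟨⟨(Freyd.Q A).map (X := ⟨0, cokernel X.ρ, 0⟩) (Y := X) ⟨σ, ⟨0, by simp⟩⟩, ?_, ?_⟩⟩
    · exact CategoryTheory.Quotient.sound _ ⟨l, hl⟩
    · refine CategoryTheory.Quotient.sound _ ⟨0, ?_⟩
      rw [zero_comp, eq_comm, sub_eq_zero]
      exact hσ
  · intro hiso
    obtain ⟨ψ, hψ⟩ := (Freyd.Q A).map_surjective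
      (inv ((Freyd.Q A).map (X := X) (Y := ⟨0, cokernel X.ρ, 0⟩)
        ⟨cokernel.π X.ρ, ⟨0, by simp⟩⟩))
    have h1 : freydRel A
        ((⟨cokernel.π X.ρ, ⟨0, by simp⟩⟩ : X ⟶ ⟨0, cokernel X.ρ, 0⟩) ≫ ψ) (𝟙 X) :=
      (Quotient.functor_map_eq_iff (freydRel A) _ _).mp (by
        rw [Functor.map_comp, hψ, IsIso.hom_inv_id, CategoryTheory.Functor.map_id])
    obtain ⟨l, hl⟩ := h1
    have h2 : freydRel A
        (ψ ≫ (⟨cokernel.π X.ρ, ⟨0, by simp⟩⟩ : X ⟶ ⟨0, cokernel X.ρ, 0⟩))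
        (𝟙 (⟨0, cokernel X.ρ, 0⟩ : FreydObj A)) :=
      (Quotient.functor_map_eq_iff (freydRel A) _ _).mp (by
        rw [Functor.map_comp, hψ, IsIso.inv_hom_id, CategoryTheory.Functor.map_id])
    obtain ⟨l', hl'⟩ := h2
    have hσ : ψ.1 ≫ cokernel.π X.ρ = 𝟙 _ := by
      have h := hl'
      simp only [FreydObj.comp_val, FreydObj.id_val, comp_zero] at h
      rw [eq_comm, sub_eq_zero] at h
      exact h
    exact ⟨freyd_aux_backward X ψ.1 l (by simpa using hl) hσ⟩
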